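/- Under the projection coercivity assumption ‖R_h q_h‖_h ≥ c̃ ‖q_h‖ for all q_h ∈ C⁻¹BV_h, the discrete inf-sup constant for the pair (V_h, R_h C⁻¹ B V_h) with trial norm ‖·‖_h satisfies m_h ≥ c̃ · m_{h,0}, where m_{h,0} = inf_{w_h ∈ V_{h,0}^⊥} ‖C⁻¹Bw_h‖/|w_h| is the inf-sup constant of the no-projection pair (V_h, C⁻¹BV_h). In particular, uniform stability of {(V_h, C⁻¹BV_h)} implies uniform stability of {(V_h, R_h C⁻¹ B V_h)}. -/

import Mathlib

open RealInnerProductSpace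

/-- under the projection coercivity assumption, the discrete inf-sup
constant of the projection-type pair `(V_h, R_h C⁻¹ B V_h)` (with the trial norm
`‖·‖_h`, i.e. the norm of `Mt`) is at least `c̃ · m_{h,0}`, where `m_{h,0}` is the
inf-sup constant of the no-projection pair `(V_h, C⁻¹BV_h)`. -/
theorem stmt5
    {V W Mt : Type*} [NormedAddCommGroup V] [InnerProductSpace ℝ V] [CompleteSpace V]
    [NormedAddCommGroup W] [InnerProductSpace ℝ W] [CompleteSpace W]
    [NormedAddCommGroup Mt] [InnerProductSpace ℝ Mt] [FiniteDimensional ℝ Mt]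
    (b : V →L[ℝ] W →L[ℝ] ℝ)
    (j : Mt →ₗ[ℝ] W) (hj : Function.Injective j)
    (CB : V → W) (hCB : ∀ v : V, ∀ q : W, ⟪CB v, q⟫ = b v q)
    (Rh : W → Mt) (hRh : ∀ p : W, ∀ qh : Mt, ⟪Rh p, qh⟫ = ⟪p, j qh⟫)
    (Vh : Submodule ℝ V) [FiniteDimensional ℝ Vh]
    (c : ℝ) (hc : 0 < c)
    (hcoer : ∀ v ∈ Vh, c * ‖CB v‖ ≤ ‖Rh (CB v)‖)
    (Mh : Set Mt) (hMh : Mh = (fun v => Rh (CB v)) '' (Vh : Set V))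
    (Vh0 : Set V) (hVh0 : Vh0 = {v : V | v ∈ Vh ∧ ∀ ph ∈ Mh, b v (j ph) = 0})
    (Vh0perp : Set V)
    (hperp : Vh0perp = {w : V | w ∈ Vh ∧ ∀ v ∈ Vh0, ⟪w, v⟫ = 0}) :
    c * (⨅ w : {w : V // w ∈ Vh0perp ∧ w ≠ 0}, ‖CB w.1‖ / ‖w.1‖) ≤
      ⨅ p : {p : Mt // p ∈ Mh ∧ p ≠ 0},
        ⨆ v : {v : V // v ∈ Vh}, b v.1 (j p.1) / (‖v.1‖ * ‖p.1‖) := by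
  subst hMh; subst hVh0; subst hperp
  set Mh' : Set Mt := (fun v => Rh (CB v)) '' (Vh : Set V) with hMh'
  have key : ∀ (v : V) (q : Mt), ⟪Rh (CB v), q⟫ = b v (j q) := by
    intro v q; rw [hRh, hCB]
  have RhCB0 : Rh (CB (0:V)) = 0 := by
    have h0 : ⟪Rh (CB (0:V)), Rh (CB (0:V))⟫ = (0:ℝ) := by rw [key]; simp
    exact inner_self_eq_zero.mp h0
  -- the submodule S with carrier Vh0
  let S : Submodule ℝ V :=
    { carrier := {v : V | v ∈ Vh ∧ ∀ ph ∈ Mh', b v (j ph) = 0}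
      add_mem' := by
        rintro a a' ⟨ha, ha2⟩ ⟨hb, hb2⟩
        refine ⟨Vh.add_mem ha hb, fun ph hph => ?_⟩
        rw [map_add, ContinuousLinearMap.add_apply, ha2 ph hph, hb2 ph hph, add_zero]
      zero_mem' := ⟨Vh.zero_mem, fun ph hph => by simp⟩
      smul_mem' := by
        rintro r a ⟨ha, ha2⟩
        refine ⟨Vh.smul_mem r ha, fun ph hph => ?_⟩
        rw [map_smul, ContinuousLinearMap.smul_apply, ha2 ph hph, smul_zero] }
  haveI : FiniteDimensional ℝ S := by
    apply Submodule.finiteDimensional_of_le (S₂ := Vh)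
    intro x hx; exact hx.1
  haveI : CompleteSpace S := FiniteDimensional.complete ℝ S
  by_cases hne : Nonempty {p : Mt // p ∈ Mh' ∧ p ≠ 0}
  · apply le_ciInf
    rintro ⟨p, hpM, hp0⟩
    obtain ⟨w, hwVh, hwp⟩ := hpM
    simp only at hwp
    set w0 : V := ((S.orthogonalProjectionOnto w : S) : V) with hw0
    have hw0S : w0 ∈ S := (S.orthogonalProjectionOnto w).2
    set w1 : V := w - w0 with hw1def
    have hw1Vh : w1 ∈ Vh := Vh.sub_mem hwVh hw0S.1
    have hw1perp : ∀ v ∈ S, ⟪w1, v⟫ = (0:ℝ) :=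
      (Submodule.mem_orthogonal' S w1).mp (S.sub_starProjection_mem_orthogonal w)
    have hRh0 : Rh (CB w0) = 0 := by
      have h0 : ⟪Rh (CB w0), Rh (CB w0)⟫ = (0:ℝ) := by
        rw [key]
        exact hw0S.2 _ ⟨w0, hw0S.1, rfl⟩
      exact inner_self_eq_zero.mp h0
    have hp1 : p = Rh (CB w1) := by
      apply ext_inner_right ℝ
      intro q
      rw [← hwp, key, key]
      have hw' : w = w0 + w1 := by rw [hw1def]; abel
      rw [hw', map_add, ContinuousLinearMap.add_apply]
      have : b w0 (j q) = 0 := by rw [← key, hRh0, inner_zero_left]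
      rw [this, zero_add]
    have hw1ne : w1 ≠ 0 := by
      intro h
      apply hp0
      rw [hp1, h, RhCB0]
    have hw1pos : (0:ℝ) < ‖w1‖ := norm_pos_iff.mpr hw1ne
    have hppos : (0:ℝ) < ‖p‖ := norm_pos_iff.mpr hp0
    have hb1 : b w1 (j p) = ‖p‖ ^ 2 := by
      rw [← key, ← hp1, real_inner_self_eq_norm_sq]
    have hnorm : c * ‖CB w1‖ ≤ ‖p‖ := by
      rw [hp1]; exact hcoer w1 hw1Vh
    -- infimum over w is at most the value at w1
    have hinf_le : (⨅ w : {w : V // w ∈ {w : V | w ∈ Vh ∧ ∀ v ∈ (S : Set V), ⟪w, v⟫ = 0} ∧ w ≠ 0},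
        ‖CB w.1‖ / ‖w.1‖) ≤ ‖CB w1‖ / ‖w1‖ := by
      have hbdd : BddBelow (Set.range fun w : {w : V // w ∈ {w : V | w ∈ Vh ∧ ∀ v ∈ (S : Set V), ⟪w, v⟫ = 0} ∧ w ≠ 0} => ‖CB w.1‖ / ‖w.1‖) := by
        refine ⟨0, ?_⟩
        rintro x ⟨i, rfl⟩
        positivity
      exact ciInf_le hbdd ⟨w1, ⟨hw1Vh, hw1perp⟩, hw1ne⟩
    -- the sup is at least the value at w1
    have hbddA : BddAbove (Set.range fun v : {v : V // v ∈ Vh} => b v.1 (j p) / (‖v.1‖ * ‖p‖)) := by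
      refine ⟨‖b‖ * ‖j p‖ / ‖p‖, ?_⟩
      rintro x ⟨⟨v, hv⟩, rfl⟩
      simp only
      rcases eq_or_ne v 0 with rfl | hv0
      · simp only [map_zero, ContinuousLinearMap.zero_apply, zero_div]
        positivity
      · have hvpos : (0:ℝ) < ‖v‖ := norm_pos_iff.mpr hv0
        rw [div_le_div_iff₀ (by positivity) hppos]
        have h1 : b v (j p) ≤ ‖b‖ * ‖v‖ * ‖j p‖ := by
          calc b v (j p) ≤ |b v (j p)| := le_abs_self _
            _ = ‖b v (j p)‖ := rfl
            _ ≤ ‖b v‖ * ‖j p‖ := (b v).le_opNorm _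
            _ ≤ (‖b‖ * ‖v‖) * ‖j p‖ := by
                have := b.le_opNorm v
                nlinarith [norm_nonneg (j p)]
        nlinarith [norm_nonneg (j p), norm_nonneg v]
    have hsup_ge : b w1 (j p) / (‖w1‖ * ‖p‖) ≤
        ⨆ v : {v : V // v ∈ Vh}, b v.1 (j p) / (‖v.1‖ * ‖p‖) :=
      le_ciSup hbddA ⟨w1, hw1Vh⟩
    calc c * (⨅ w : {w : V // w ∈ {w : V | w ∈ Vh ∧ ∀ v ∈ (S : Set V), ⟪w, v⟫ = 0} ∧ w ≠ 0}, ‖CB w.1‖ / ‖w.1‖)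
        ≤ c * (‖CB w1‖ / ‖w1‖) := by
          exact mul_le_mul_of_nonneg_left hinf_le hc.le
      _ = (c * ‖CB w1‖) / ‖w1‖ := by ring
      _ ≤ ‖p‖ / ‖w1‖ := by gcongr
      _ = b w1 (j p) / (‖w1‖ * ‖p‖) := by
          rw [hb1]; field_simp
      _ ≤ _ := hsup_ge
  · -- Mh' has no nonzero element: both sides degenerate
    have hMh0 : ∀ q ∈ Mh', q = 0 := by
      intro q hq
      by_contra h
      exact hne ⟨⟨q, hq, h⟩⟩
    haveI hempty1 : IsEmpty {p : Mt // p ∈ Mh' ∧ p ≠ 0} := not_nonempty_iff.mp hne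
    haveI hempty2 : IsEmpty {w : V // w ∈ {w : V | w ∈ Vh ∧
        ∀ v ∈ {v : V | v ∈ Vh ∧ ∀ ph ∈ Mh', b v (j ph) = 0}, ⟪w, v⟫ = 0} ∧ w ≠ 0} := by
      constructor
      rintro ⟨w, ⟨⟨hwVh, hwperp⟩, hwne⟩⟩
      have hwS : w ∈ Vh ∧ ∀ ph ∈ Mh', b w (j ph) = 0 := by
        refine ⟨hwVh, fun ph hph => ?_⟩
        rw [hMh0 ph hph]
        simp
      have h0 : ⟪w, w⟫ = (0:ℝ) := hwperp w hwS
      exact hwne (inner_self_eq_zero.mp h0)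
    rw [Real.iInf_of_isEmpty, Real.iInf_of_isEmpty, mul_zero]
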